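/- In the rectangle R = [0,L]×[0,ℓ] with coordinates (s,t), let ψ(s,t) = f₀(t) exp(−iα₀ s − (i/2) s t) where (α₀, f₀) minimizes the finite-interval 1D functional E¹ᴰ_{α,ℓ}. Let F(s,t) = (1/2)(−t, s). Then the Ginzburg–Landau energy G[ψ; R] = ∫_R {|(∇ + iF)ψ|² − (1/(2b))(2|ψ|² − |ψ|⁴)} ds dt equals L·E¹ᴰ₀(ℓ), where E¹ᴰ₀(ℓ) = E¹ᴰ_{α₀,ℓ}[f₀]. -/

import Mathlib

open MeasureTheory

/-- Partial derivative in the first (tangential) variable. -/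
noncomputable def pdS (ψ : ℝ × ℝ → ℂ) (p : ℝ × ℝ) : ℂ :=
  deriv (fun x => ψ (x, p.2)) p.1

/-- Partial derivative in the second (normal) variable. -/
noncomputable def pdT (ψ : ℝ × ℝ → ℂ) (p : ℝ × ℝ) : ℂ :=
  deriv (fun y => ψ (p.1, y)) p.2

/-- The Ginzburg–Landau energy on the rectangle `[0,L] × [0,ℓ]` with magnetic
potential `F(s,t) = (1/2)(-t, s)`. -/
noncomputable def GLrect (b L ℓ : ℝ) (ψ : ℝ × ℝ → ℂ) : ℝ :=
  ∫ s in (0:ℝ)..L, ∫ t in (0:ℝ)..ℓ,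
    (‖pdS ψ (s, t) + Complex.I * (-(t / 2) : ℝ) * ψ (s, t)‖ ^ 2
      + ‖pdT ψ (s, t) + Complex.I * ((s / 2 : ℝ) : ℂ) * ψ (s, t)‖ ^ 2
      - (1 / (2 * b)) * (2 * ‖ψ (s, t)‖ ^ 2 - ‖ψ (s, t)‖ ^ 4))

/-- The finite-interval 1D functional. -/
noncomputable def E1Dl (b ℓ α : ℝ) (f : ℝ → ℝ) : ℝ :=
  ∫ t in (0:ℝ)..ℓ,
    (deriv f t ^ 2 + (t + α) ^ 2 * f t ^ 2 - (1 / (2 * b)) * (2 * f t ^ 2 - f t ^ 4))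

/-- `H¹([0, ℓ])`. -/
def H1Interval (ℓ : ℝ) (f : ℝ → ℝ) : Prop :=
  MemLp f 2 (volume.restrict (Set.Ioc 0 ℓ)) ∧
  MemLp (deriv f) 2 (volume.restrict (Set.Ioc 0 ℓ))

/-- The GL energy of the product ansatz `ψ(s,t) = f₀(t) e^{-iα₀ s - i s t/2}` on the
rectangle `[0,L] × [0,ℓ]` equals `L · E¹ᴰ₀(ℓ)`. -/
theorem GL_energy_of_ansatz (b L ℓ α₀ : ℝ) (hb : 1 < b) (hL : 0 < L) (hℓ : 0 < ℓ)
    (f₀ : ℝ → ℝ) (hreg : ContDiff ℝ 1 f₀) (hdom : H1Interval ℓ f₀)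
    (hmin : ∀ (α : ℝ) (g : ℝ → ℝ), H1Interval ℓ g → E1Dl b ℓ α₀ f₀ ≤ E1Dl b ℓ α g) :
    GLrect b L ℓ (fun p =>
        (f₀ p.2 : ℂ) * Complex.exp (-Complex.I * ((α₀ * p.1 + p.1 * p.2 / 2 : ℝ) : ℂ)))
      = L * E1Dl b ℓ α₀ f₀ := by
  set ψ : ℝ × ℝ → ℂ := fun p =>
    (f₀ p.2 : ℂ) * Complex.exp (-Complex.I * ((α₀ * p.1 + p.1 * p.2 / 2 : ℝ) : ℂ)) with hψ
  have hf' : Differentiable ℝ f₀ := hreg.differentiable one_ne_zero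
  have key : ∀ s t : ℝ,
      (‖pdS ψ (s, t) + Complex.I * (-(t / 2) : ℝ) * ψ (s, t)‖ ^ 2
        + ‖pdT ψ (s, t) + Complex.I * ((s / 2 : ℝ) : ℂ) * ψ (s, t)‖ ^ 2
        - (1 / (2 * b)) * (2 * ‖ψ (s, t)‖ ^ 2 - ‖ψ (s, t)‖ ^ 4))
      = deriv f₀ t ^ 2 + (t + α₀) ^ 2 * f₀ t ^ 2
          - (1 / (2 * b)) * (2 * f₀ t ^ 2 - f₀ t ^ 4) := by
    intro s t
    set E : ℂ := Complex.exp (-Complex.I * ((α₀ * s + s * t / 2 : ℝ) : ℂ)) with hE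
    have hEnorm : ‖E‖ = 1 := by
      rw [hE, Complex.norm_exp]
      simp
    have hψst : ψ (s, t) = (f₀ t : ℂ) * E := rfl
    -- tangential derivative
    have hS : pdS ψ (s, t) = (f₀ t : ℂ) * E * (-Complex.I * ((α₀ : ℂ) + (t : ℂ) / 2)) := by
      have hfun : (fun x : ℝ => ψ (x, t))
          = fun x : ℝ => (f₀ t : ℂ)
              * Complex.exp ((-Complex.I * ((α₀ : ℂ) + (t : ℂ) / 2)) * (x : ℂ)) := by
        funext x
        simp only [hψ]
        congr 1
        congr 1
        push_cast
        ring
      have h1 : HasDerivAt (fun x : ℝ => (-Complex.I * ((α₀ : ℂ) + (t : ℂ) / 2)) * (x : ℂ))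
          (-Complex.I * ((α₀ : ℂ) + (t : ℂ) / 2)) s := by
        simpa using (Complex.ofRealCLM.hasDerivAt (x := s)).const_mul
          (-Complex.I * ((α₀ : ℂ) + (t : ℂ) / 2))
      have hd := (h1.cexp).const_mul (f₀ t : ℂ)
      rw [pdS, hfun, hd.deriv]
      have hEe : Complex.exp ((-Complex.I * ((α₀ : ℂ) + (t : ℂ) / 2)) * (s : ℂ)) = E := by
        rw [hE]
        congr 1
        push_cast
        ring
      rw [hEe]
      ring
    -- normal derivative
    have hT : pdT ψ (s, t)
        = ((deriv f₀ t : ℝ) : ℂ) * E + (f₀ t : ℂ) * E * (-Complex.I * ((s : ℂ) / 2)) := by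
      have hfun : (fun y : ℝ => ψ (s, y))
          = fun y : ℝ => (f₀ y : ℂ)
              * Complex.exp ((-Complex.I * ((α₀ : ℂ) * s)) + (-Complex.I * ((s : ℂ) / 2)) * (y : ℂ)) := by
        funext y
        simp only [hψ]
        congr 1
        congr 1
        push_cast
        ring
      have h2 : HasDerivAt (fun y : ℝ => (f₀ y : ℂ)) ((deriv f₀ t : ℝ) : ℂ) t :=
        ((hf' t).hasDerivAt).ofReal_comp
      have h3 : HasDerivAt
          (fun y : ℝ => (-Complex.I * ((α₀ : ℂ) * s)) + (-Complex.I * ((s : ℂ) / 2)) * (y : ℂ))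
          (-Complex.I * ((s : ℂ) / 2)) t := by
        simpa using ((Complex.ofRealCLM.hasDerivAt (x := t)).const_mul
          (-Complex.I * ((s : ℂ) / 2))).const_add (-Complex.I * ((α₀ : ℂ) * s))
      have hd : HasDerivAt (fun y : ℝ => (f₀ y : ℂ)
          * Complex.exp ((-Complex.I * ((α₀ : ℂ) * s)) + (-Complex.I * ((s : ℂ) / 2)) * (y : ℂ))) _ t :=
        h2.mul (h3.cexp)
      rw [pdT]; simp only []; rw [hfun, hd.deriv]
      have hEe : Complex.exp ((-Complex.I * ((α₀ : ℂ) * s)) + (-Complex.I * ((s : ℂ) / 2)) * (t : ℂ)) = E := by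
        rw [hE]
        congr 1
        push_cast
        ring
      rw [hEe]
      ring
    have e1 : pdS ψ (s, t) + Complex.I * (-(t / 2) : ℝ) * ψ (s, t)
        = (f₀ t : ℂ) * E * (-Complex.I * (((α₀ + t : ℝ)) : ℂ)) := by
      rw [hS, hψst]
      push_cast
      ring
    have e2 : pdT ψ (s, t) + Complex.I * ((s / 2 : ℝ) : ℂ) * ψ (s, t)
        = ((deriv f₀ t : ℝ) : ℂ) * E := by
      rw [hT, hψst]
      push_cast
      ring
    have n1 : ‖pdS ψ (s, t) + Complex.I * (-(t / 2) : ℝ) * ψ (s, t)‖ ^ 2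
        = f₀ t ^ 2 * (α₀ + t) ^ 2 := by
      rw [e1]
      rw [norm_mul, norm_mul, norm_mul, hEnorm, Complex.norm_real, Complex.norm_real,
        norm_neg, Complex.norm_I]
      rw [Real.norm_eq_abs, Real.norm_eq_abs]
      rw [show (|f₀ t| * 1 * (1 * |α₀ + t|)) = |f₀ t| * |α₀ + t| by ring]
      rw [mul_pow, sq_abs, sq_abs]
    have n2 : ‖pdT ψ (s, t) + Complex.I * ((s / 2 : ℝ) : ℂ) * ψ (s, t)‖ ^ 2
        = deriv f₀ t ^ 2 := by
      rw [e2, norm_mul, hEnorm, Complex.norm_real, Real.norm_eq_abs, mul_one, sq_abs]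
    have n0 : ‖ψ (s, t)‖ ^ 2 = f₀ t ^ 2 := by
      rw [hψst, norm_mul, hEnorm, Complex.norm_real, Real.norm_eq_abs, mul_one, sq_abs]
    have n4 : ‖ψ (s, t)‖ ^ 4 = f₀ t ^ 4 := by
      have : ‖ψ (s, t)‖ ^ 4 = (‖ψ (s, t)‖ ^ 2) ^ 2 := by ring
      rw [this, n0]
      ring
    rw [n1, n2, n0, n4]
    ring
  simp only [GLrect]
  have hinner : ∀ s : ℝ,
      (∫ t in (0:ℝ)..ℓ,
        (‖pdS ψ (s, t) + Complex.I * (-(t / 2) : ℝ) * ψ (s, t)‖ ^ 2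
          + ‖pdT ψ (s, t) + Complex.I * ((s / 2 : ℝ) : ℂ) * ψ (s, t)‖ ^ 2
          - (1 / (2 * b)) * (2 * ‖ψ (s, t)‖ ^ 2 - ‖ψ (s, t)‖ ^ 4)))
      = E1Dl b ℓ α₀ f₀ := by
    intro s
    rw [E1Dl]
    exact intervalIntegral.integral_congr (fun t _ => key s t)
  rw [intervalIntegral.integral_congr (fun s _ => hinner s)]
  rw [intervalIntegral.integral_const]
  simp [smul_eq_mul]
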